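/- Let k be a field of characteristic ≠ 2, (V, b) a nondegenerate symmetric bilinear space of dimension r, and B the induced form on Sym²(V) given by B(u·v, u'·v') = b(u,u')b(v,v') + b(u,v')b(u',v). Then det(B) = 2^r · det(b)^{r−1} in k×/(k×)². -/

import Mathlib

open Finset in
lemma prod_offdiag_aux {k : Type*} [CommRing k] {r : ℕ} (lam : Fin r → k) :
    (∏ p ∈ univ.filter (fun p : Fin r × Fin r => p.1 ≠ p.2), lam p.1)
      = (∏ i, lam i) ^ (r - 1) := by
  rw [Finset.prod_filter, Fintype.prod_prod_type, ← Finset.prod_pow]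
  refine Finset.prod_congr rfl fun i _ => ?_
  simp only [ne_eq]
  rw [← Finset.prod_filter, Finset.prod_const]
  congr 1
  rw [Finset.filter_ne, Finset.card_erase_of_mem (Finset.mem_univ i), Finset.card_univ,
    Fintype.card_fin]

open Finset in
lemma prod_lt_aux {k : Type*} [CommRing k] {r : ℕ} (lam : Fin r → k) :
    (∏ p ∈ univ.filter (fun p : Fin r × Fin r => p.1 < p.2), lam p.1 * lam p.2)
      = (∏ i, lam i) ^ (r - 1) := by
  rw [Finset.prod_mul_distrib]
  have h2 : (∏ p ∈ univ.filter (fun p : Fin r × Fin r => p.1 < p.2), lam p.2)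
      = ∏ p ∈ univ.filter (fun p : Fin r × Fin r => p.2 < p.1), lam p.1 := by
    refine Finset.prod_nbij' Prod.swap Prod.swap ?_ ?_ ?_ ?_ ?_ <;>
      simp [Finset.mem_filter]
  rw [h2, ← Finset.prod_union]
  · rw [← prod_offdiag_aux lam]
    congr 1
    ext p
    simp [Finset.mem_filter, Finset.mem_union, lt_or_lt_iff_ne]
  · rw [Finset.disjoint_filter]
    intro p _ h1 h2
    exact absurd h1 (not_lt_of_gt h2)

open Finset in
lemma prod_pairs {k : Type*} [CommRing k] {r : ℕ} (lam : Fin r → k) :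
    (∏ p : {p : Fin r × Fin r // p.1 ≤ p.2},
        (if p.1.1 = p.1.2 then 2 * lam p.1.1 ^ 2 else lam p.1.1 * lam p.1.2))
      = 2 ^ r * (∏ i, lam i) ^ (r - 1) * (∏ i, lam i) ^ 2 := by
  classical
  rw [← Finset.prod_subtype (Finset.univ.filter fun p : Fin r × Fin r => p.1 ≤ p.2)
      (by simp) (fun p : Fin r × Fin r => if p.1 = p.2 then 2 * lam p.1 ^ 2 else lam p.1 * lam p.2)]
  rw [← Finset.prod_filter_mul_prod_filter_not _ (fun p : Fin r × Fin r => p.1 = p.2)]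
  have hfe : (Finset.univ.filter fun p : Fin r × Fin r => p.1 ≤ p.2).filter
      (fun p => p.1 = p.2) = Finset.univ.filter (fun p : Fin r × Fin r => p.1 = p.2) := by
    rw [Finset.filter_filter]
    apply Finset.filter_congr
    intro p _
    constructor
    · exact fun h => h.2
    · exact fun h => ⟨le_of_eq h, h⟩
  have hfl : (Finset.univ.filter fun p : Fin r × Fin r => p.1 ≤ p.2).filter
      (fun p => ¬ p.1 = p.2) = Finset.univ.filter (fun p : Fin r × Fin r => p.1 < p.2) := by
    rw [Finset.filter_filter]
    apply Finset.filter_congr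
    intro p _
    constructor
    · exact fun h => lt_of_le_of_ne h.1 h.2
    · exact fun h => ⟨le_of_lt h, ne_of_lt h⟩
  rw [hfe, hfl]
  have h1 : (∏ p ∈ Finset.univ.filter (fun p : Fin r × Fin r => p.1 = p.2),
      (if p.1 = p.2 then 2 * lam p.1 ^ 2 else lam p.1 * lam p.2))
      = 2 ^ r * (∏ i, lam i) ^ 2 := by
    rw [Finset.prod_congr rfl (fun p hp => if_pos (Finset.mem_filter.1 hp).2)]
    rw [show (Finset.univ.filter fun p : Fin r × Fin r => p.1 = p.2)
        = Finset.univ.image (fun i : Fin r => (i, i)) by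
      ext ⟨a, b⟩
      simp only [Finset.mem_filter, Finset.mem_univ, true_and, Finset.mem_image, Prod.ext_iff]
      constructor
      · rintro rfl; exact ⟨a, rfl, rfl⟩
      · rintro ⟨i, rfl, rfl⟩; rfl]
    rw [Finset.prod_image (by intro a _ b _ h; simpa [Prod.ext_iff] using h)]
    rw [Finset.prod_mul_distrib, Finset.prod_const, Finset.card_univ, Fintype.card_fin,
      Finset.prod_pow]
  have h2 : (∏ p ∈ Finset.univ.filter (fun p : Fin r × Fin r => p.1 < p.2),
      (if p.1 = p.2 then 2 * lam p.1 ^ 2 else lam p.1 * lam p.2))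
      = (∏ i, lam i) ^ (r - 1) := by
    rw [Finset.prod_congr rfl (fun p hp => if_neg (ne_of_lt (Finset.mem_filter.1 hp).2))]
    exact prod_lt_aux lam
  rw [h1, h2]
  ring



/-- Let `k` be a field of characteristic `≠ 2`, `(V, b)` a nondegenerate symmetric
bilinear space of dimension `r` with basis `e`, and `B` the induced form on `Sym²(V)`
(presented via a symmetric multiplication `m2` whose products of basis vectors
`{eᵢ·eⱼ}_{i≤j}` form a basis), given by `B(u·v, u'·v') = b(u,u')b(v,v') + b(u,v')b(u',v)`.
Then `det(B) = 2^r · det(b)^{r−1}` in `kˣ/(kˣ)²`, where determinants are taken with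
respect to Gram matrices for the chosen bases. -/
theorem stmt15 {k V S : Type*} [Field k] [AddCommGroup V] [Module k V]
    [AddCommGroup S] [Module k S] (hchar : ringChar k ≠ 2) {r : ℕ}
    (e : Module.Basis (Fin r) k V) (b : V →ₗ[k] V →ₗ[k] k)
    (hbs : ∀ u v, b u v = b v u)
    (hbn : ∀ v, (∀ w, b v w = 0) → v = 0)
    (m2 : V →ₗ[k] V →ₗ[k] S)
    (hm2s : ∀ u v, m2 u v = m2 v u)
    (sb : Module.Basis {p : Fin r × Fin r // p.1 ≤ p.2} k S)
    (hsb : ∀ p : {p : Fin r × Fin r // p.1 ≤ p.2}, sb p = m2 (e p.1.1) (e p.1.2))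
    (B : S →ₗ[k] S →ₗ[k] k)
    (hB : ∀ u v u' v' : V,
      B (m2 u v) (m2 u' v') = b u u' * b v v' + b u v' * b u' v) :
    ∃ u : k, u ≠ 0 ∧
      (Matrix.of fun p q : {p : Fin r × Fin r // p.1 ≤ p.2} => B (sb p) (sb q)).det
        = u ^ 2 * (2 ^ r * (Matrix.of fun i j : Fin r => b (e i) (e j)).det ^ (r - 1)) := by
  classical
  -- dispose of r = 0
  rcases Nat.eq_zero_or_pos r with hr0 | hrpos
  · subst hr0
    haveI : IsEmpty {p : Fin 0 × Fin 0 // p.1 ≤ p.2} := ⟨fun p => p.1.1.elim0⟩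
    refine ⟨1, one_ne_zero, ?_⟩
    simp [Matrix.det_isEmpty]
  haveI : Invertible (2 : k) := invertibleOfNonzero (Ring.two_ne_zero hchar)
  haveI : Module.Finite k V := Module.Finite.of_basis e
  have hbsymm : LinearMap.IsSymm b := ⟨fun x y => by simpa using hbs x y⟩
  obtain ⟨f0, hf0⟩ := LinearMap.BilinForm.exists_orthogonal_basis hbsymm
  have hrank : Module.finrank k V = r := by
    rw [Module.finrank_eq_card_basis e, Fintype.card_fin]
  set f : Module.Basis (Fin r) k V := f0.reindex (finCongr hrank) with hfdef
  have hf : ∀ i j : Fin r, i ≠ j → b (f i) (f j) = 0 := by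
    intro i j hij
    rw [hfdef]
    simp only [Module.Basis.reindex_apply]
    exact LinearMap.isOrthoᵢ_def.mp hf0 _ _
      (fun h => hij (by simpa using congrArg (finCongr hrank) h))
  set lam : Fin r → k := fun i => b (f i) (f i) with hlamdef
  have hlam : ∀ i, lam i ≠ 0 := by
    intro i hi
    refine f.ne_zero i ?_
    apply hbn
    intro w
    have : b (f i) = 0 := by
      apply f.ext
      intro j
      by_cases h : i = j
      · subst h; exact hi
      · exact hf i j h
    rw [this]; rfl
  -- basis of S built from products of f
  set g : {p : Fin r × Fin r // p.1 ≤ p.2} → S := fun p => m2 (f p.1.1) (f p.1.2) with hgdef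
  have hmem : ∀ i j : Fin r, m2 (f i) (f j) ∈ Submodule.span k (Set.range g) := by
    intro i j
    rcases le_total i j with h | h
    · exact Submodule.subset_span ⟨⟨(i, j), h⟩, rfl⟩
    · rw [hm2s]; exact Submodule.subset_span ⟨⟨(j, i), h⟩, rfl⟩
  have hmem2 : ∀ u v : V, m2 u v ∈ Submodule.span k (Set.range g) := by
    intro u v
    rw [← f.sum_repr u, ← f.sum_repr v]
    simp only [map_sum, map_smul, LinearMap.sum_apply, LinearMap.smul_apply,
      LinearMap.coe_sum, Finset.sum_apply]
    exact Submodule.sum_mem _ fun i _ => Submodule.smul_mem _ _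
      (Submodule.sum_mem _ fun j _ => Submodule.smul_mem _ _ (hmem _ _))
  have hgspan : ⊤ ≤ Submodule.span k (Set.range g) := by
    rw [← sb.span_eq]
    refine Submodule.span_le.2 ?_
    rintro x ⟨p, rfl⟩
    rw [hsb]
    exact hmem2 _ _
  have hcard : Fintype.card {p : Fin r × Fin r // p.1 ≤ p.2} = Module.finrank k S :=
    (Module.finrank_eq_card_basis sb).symm
  set s' : Module.Basis {p : Fin r × Fin r // p.1 ≤ p.2} k S :=
    basisOfTopLeSpanOfCardEqFinrank g hgspan hcard with hs'def
  have hs' : ⇑s' = g := coe_basisOfTopLeSpanOfCardEqFinrank g hgspan hcard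
  -- Gram matrices
  have hGsb : (Matrix.of fun p q : {p : Fin r × Fin r // p.1 ≤ p.2} => B (sb p) (sb q))
      = LinearMap.toMatrix₂ sb sb B := by
    ext p q
    rw [LinearMap.toMatrix₂_apply]
    rfl
  have hGe : (Matrix.of fun i j : Fin r => b (e i) (e j)) = LinearMap.toMatrix₂ e e b := by
    ext i j
    rw [LinearMap.toMatrix₂_apply]
    rfl
  -- the Gram matrix of b in the orthogonal basis is diagonal
  have hGf : LinearMap.toMatrix₂ f f b = Matrix.diagonal lam := by
    ext i j
    rw [LinearMap.toMatrix₂_apply]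
    by_cases h : i = j
    · subst h; rw [Matrix.diagonal_apply_eq]
    · rw [Matrix.diagonal_apply_ne _ h]; exact hf i j h
  -- the Gram matrix of B in the basis s' is diagonal
  set Dfun : {p : Fin r × Fin r // p.1 ≤ p.2} → k :=
    fun p => if p.1.1 = p.1.2 then 2 * lam p.1.1 ^ 2 else lam p.1.1 * lam p.1.2 with hDdef
  have hGs' : LinearMap.toMatrix₂ s' s' B = Matrix.diagonal Dfun := by
    ext p q
    rw [LinearMap.toMatrix₂_apply, hs']
    obtain ⟨⟨i, j⟩, hij⟩ := p
    obtain ⟨⟨a, c⟩, hac⟩ := q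
    simp only [hgdef, hB]
    by_cases hpq : (⟨(i, j), hij⟩ : {p : Fin r × Fin r // p.1 ≤ p.2}) = ⟨(a, c), hac⟩
    · rw [hpq, Matrix.diagonal_apply_eq]
      obtain ⟨rfl, rfl⟩ : i = a ∧ j = c := by
        simpa [Prod.ext_iff] using congrArg Subtype.val hpq
      simp only [hDdef]
      by_cases h : i = j
      · subst h; rw [if_pos rfl]; ring
      · rw [if_neg h, hf i j h]; ring
    · rw [Matrix.diagonal_apply_ne _ hpq]
      have hij' : i ≤ j := hij
      have hac' : a ≤ c := hac
      have hne : ¬ (i = a ∧ j = c) := by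
        rintro ⟨rfl, rfl⟩; exact hpq rfl
      by_cases h1 : i = a
      · have h2 : j ≠ c := fun h => hne ⟨h1, h⟩
        rw [hf j c h2, mul_zero, zero_add]
        by_cases h3 : i = c
        · have h4 : a ≠ j := fun h => h2 (by rw [← h, ← h1, h3])
          rw [hf a j h4, mul_zero]
        · rw [hf i c h3, zero_mul]
      · rw [hf i a h1, zero_mul, zero_add]
        by_cases h3 : i = c
        · have h4 : a ≠ j := by
            intro h
            apply h1
            apply le_antisymm
            · rw [h]; exact hij'
            · rw [h3]; exact hac'
          rw [hf a j h4, mul_zero]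
        · rw [hf i c h3, zero_mul]
  -- determinants
  set N : k := (sb.toMatrix s').det with hNdef
  have hNne : N ≠ 0 := by
    have h := congrArg Matrix.det (Module.Basis.toMatrix_mul_toMatrix_flip sb s')
    rw [Matrix.det_mul, Matrix.det_one] at h
    exact left_ne_zero_of_mul_eq_one h
  set M : k := (e.toMatrix f).det with hMdef
  have hMne : M ≠ 0 := by
    have h := congrArg Matrix.det (Module.Basis.toMatrix_mul_toMatrix_flip e f)
    rw [Matrix.det_mul, Matrix.det_one] at h
    exact left_ne_zero_of_mul_eq_one h
  set L : k := ∏ i, lam i with hLdef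
  have hLne : L ≠ 0 := Finset.prod_ne_zero_iff.2 fun i _ => hlam i
  set D : k := (LinearMap.toMatrix₂ e e b).det with hDdet
  have hcong1 : L = M ^ 2 * D := by
    have h := congrArg Matrix.det
      (LinearMap.toMatrix₂_mul_basis_toMatrix (b₁ := e) (b₂ := e) f f b)
    rw [Matrix.det_mul, Matrix.det_mul, Matrix.det_transpose, hGf, Matrix.det_diagonal] at h
    rw [hLdef, ← h, hMdef, hDdet]
    ring
  have hDne : D ≠ 0 := by
    intro h
    rw [h, mul_zero] at hcong1
    exact hLne hcong1
  have hcong2 : 2 ^ r * L ^ (r - 1) * L ^ 2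
      = N ^ 2 * (LinearMap.toMatrix₂ sb sb B).det := by
    have h := congrArg Matrix.det
      (LinearMap.toMatrix₂_mul_basis_toMatrix (b₁ := sb) (b₂ := sb) s' s' B)
    rw [Matrix.det_mul, Matrix.det_mul, Matrix.det_transpose, hGs', Matrix.det_diagonal] at h
    have hprod : ∏ p : {p : Fin r × Fin r // p.1 ≤ p.2}, Dfun p
        = 2 ^ r * L ^ (r - 1) * L ^ 2 := by
      rw [hDdef, hLdef]; exact prod_pairs lam
    rw [← hprod, ← h, hNdef]
    ring
  obtain ⟨s, rfl⟩ : ∃ s, r = s + 1 :=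
    ⟨r - 1, (Nat.succ_pred_eq_of_pos hrpos).symm⟩
  refine ⟨M ^ (s + 2) * D * N⁻¹, ?_, ?_⟩
  · exact mul_ne_zero (mul_ne_zero (pow_ne_zero _ hMne) hDne) (inv_ne_zero hNne)
  · rw [hGsb, hGe, ← hDdet]
    apply mul_left_cancel₀ (pow_ne_zero 2 hNne)
    rw [← hcong2, hcong1]
    simp only [Nat.add_sub_cancel]
    field_simp
    ring
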